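/- In the two-type two-category departing bandit with all click probabilities at most 1-ε, let Π_H be the set of all (a,h)-threshold policies with a ∈ {1,2}, h ∈ {0,1,…,H}. Then E[V^{π*}] - max_{π ∈ Π_H} E[V^π] ≤ (1-ε)^H/ε, where π* is the optimal policy. -/

import Mathlib

open Finset

def cnt1 (a : ℕ → Bool) (i : ℕ) : ℕ := ((Finset.range i).filter (fun j => a j = true)).card

def cnt2 (a : ℕ → Bool) (i : ℕ) : ℕ := ((Finset.range i).filter (fun j => a j = false)).card

noncomputable def twoTypeReturn (p1x p2x p1y p2y b : ℝ) (a : ℕ → Bool) : ℝ :=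
  ∑' i : ℕ, (b * p1x ^ cnt1 a (i + 1) * p2x ^ cnt2 a (i + 1)
      + (1 - b) * p1y ^ cnt1 a (i + 1) * p2y ^ cnt2 a (i + 1))

/-- The `(c, h)`-threshold policy: recommend category `c` for the first `h`
iterations, then the other category forever after. -/
def thresholdSeq (c : Bool) (h : ℕ) : ℕ → Bool := fun j => if j < h then c else !c

namespace ThreshAux

/-- Geometric partial sum. -/
noncomputable def E (p : ℝ) (n : ℕ) : ℝ := ∑ i ∈ Finset.range n, p ^ i

lemma E_nonneg {p : ℝ} (hp : 0 ≤ p) (n : ℕ) : 0 ≤ E p n :=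
  Finset.sum_nonneg fun i _ => pow_nonneg hp i

lemma E_mono {p q : ℝ} (hp : 0 ≤ p) (hpq : p ≤ q) (n : ℕ) : E p n ≤ E q n :=
  Finset.sum_le_sum fun i _ => pow_le_pow_left₀ hp hpq i

lemma E_succ (p : ℝ) (n : ℕ) : E p (n + 1) = 1 + p * E p n := by
  rw [E, geom_sum_succ, add_comm, E]

lemma E_succ' (p : ℝ) (n : ℕ) : E p (n + 1) = p ^ n + E p n := by
  rw [E, geom_sum_succ', E]

lemma lemE {s v : ℝ} (hs : 0 ≤ s) (hsv : s ≤ v) {K n : ℕ} (h : K ≤ n) :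
    E v K * E s n ≤ E s K * E v n := by
  have hv : 0 ≤ v := hs.trans hsv
  induction n, h using Nat.le_induction with
  | base => exact le_of_eq (by ring)
  | succ n hKn ih =>
    have hstep : E v K * s ^ n ≤ E s K * v ^ n := by
      rw [E, E, Finset.sum_mul, Finset.sum_mul]
      refine Finset.sum_le_sum fun t ht => ?_
      have htn : t ≤ n := le_trans (Nat.le_of_lt_succ (Nat.lt_succ_of_lt
        (lt_of_lt_of_le (Finset.mem_range.mp ht) hKn))) (le_refl n)
      have hps : s ^ n = s ^ t * s ^ (n - t) := by
        rw [← pow_add, Nat.add_sub_cancel' htn]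
      have hpv : v ^ n = v ^ t * v ^ (n - t) := by
        rw [← pow_add, Nat.add_sub_cancel' htn]
      calc v ^ t * s ^ n = (s ^ t * v ^ t) * s ^ (n - t) := by rw [hps]; ring
        _ ≤ (s ^ t * v ^ t) * v ^ (n - t) := by
            refine mul_le_mul_of_nonneg_left (pow_le_pow_left₀ hs hsv _) ?_
            positivity
        _ = s ^ t * v ^ n := by rw [hpv]; ring
    rw [E_succ' s n, E_succ' v n]
    nlinarith [hstep, ih]

/-- factorization identity: `E x n - E y n = (x - y) * ∑ a < n, x^a * E y (n-1-a)` -/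
lemma W_ident (x y : ℝ) (n : ℕ) :
    E x n - E y n = (x - y) * ∑ a ∈ Finset.range n, x ^ a * E y (n - 1 - a) := by
  induction n with
  | zero => simp [E]
  | succ n ih =>
    have hW : ∑ a ∈ Finset.range (n + 1), x ^ a * E y (n + 1 - 1 - a)
        = (∑ a ∈ Finset.range n, x ^ a * E y (n - 1 - a))
          + ∑ a ∈ Finset.range n, x ^ a * y ^ (n - 1 - a) := by
      rw [Finset.sum_range_succ]
      have h0 : E y (n + 1 - 1 - n) = 0 := by simp [E]
      rw [h0, mul_zero, add_zero, ← Finset.sum_add_distrib]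
      refine Finset.sum_congr rfl fun a ha => ?_
      have han : a < n := Finset.mem_range.mp ha
      have : n + 1 - 1 - a = (n - 1 - a) + 1 := by omega
      rw [this, E_succ', mul_add]
      ring
    have hgeo : (∑ a ∈ Finset.range n, x ^ a * y ^ (n - 1 - a)) * (x - y)
        = x ^ n - y ^ n := geom_sum₂_mul x y n
    rw [hW, E_succ' x n, E_succ' y n]
    rw [mul_add, ← ih]
    nlinarith [hgeo]

/-- key inequality for case (c) -/
lemma dagger {r s u v : ℝ} (hu : 0 ≤ u) (hur : u ≤ r) (hs : 0 ≤ s) (hsv : s ≤ v) (n : ℕ) :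
    u * (∑ a ∈ Finset.range n, u ^ a * E v (n - 1 - a)) * E s n
      ≤ r * (∑ a ∈ Finset.range n, r ^ a * E s (n - 1 - a)) * E v n := by
  have hv : 0 ≤ v := hs.trans hsv
  have hr : 0 ≤ r := hu.trans hur
  rw [Finset.mul_sum, Finset.mul_sum, Finset.sum_mul, Finset.sum_mul]
  refine Finset.sum_le_sum fun a ha => ?_
  have hK : n - 1 - a ≤ n := by omega
  have h1 : u * (u ^ a * E v (n - 1 - a)) * E s n = u ^ (a + 1) * (E v (n - 1 - a) * E s n) := by
    rw [pow_succ]; ring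
  have h2 : r * (r ^ a * E s (n - 1 - a)) * E v n = r ^ (a + 1) * (E s (n - 1 - a) * E v n) := by
    rw [pow_succ]; ring
  rw [h1, h2]
  refine mul_le_mul (pow_le_pow_left₀ hu hur _) (lemE hs hsv hK) ?_ (by positivity)
  have := E_nonneg hv (n - 1 - a)
  have := E_nonneg hs n
  positivity

/-- Value of a finite word: `b, c` are current weights. -/
noncomputable def S (r s u v : ℝ) : ℝ → ℝ → List Bool → ℝ
  | _, _, [] => 0
  | b, c, (true :: w) => b * r + c * u + S r s u v (b * r) (c * u) w
  | b, c, (false :: w) => b * s + c * v + S r s u v (b * s) (c * v) w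

@[simp] lemma S_nil (r s u v b c : ℝ) : S r s u v b c [] = 0 := rfl
lemma S_true (r s u v b c : ℝ) (w : List Bool) :
    S r s u v b c (true :: w) = b * r + c * u + S r s u v (b * r) (c * u) w := rfl
lemma S_false (r s u v b c : ℝ) (w : List Bool) :
    S r s u v b c (false :: w) = b * s + c * v + S r s u v (b * s) (c * v) w := rfl

/-- coefficients can be permuted (type swap). -/
lemma S_typeswap (r s u v : ℝ) (w : List Bool) : ∀ b c : ℝ,
    S r s u v b c w = S u v r s c b w := by
  induction w with
  | nil => intro b c; rfl
  | cons x w ih =>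
    intro b c
    cases x
    · rw [S_false, S_false, ih]; ring_nf
    · rw [S_true, S_true, ih]; ring_nf

/-- category flip. -/
lemma S_flip (r s u v : ℝ) (w : List Bool) : ∀ b c : ℝ,
    S r s u v b c (w.map not) = S s r v u b c w := by
  induction w with
  | nil => intro b c; rfl
  | cons x w ih =>
    intro b c
    cases x
    · simp only [List.map_cons, Bool.not_false, S_true, S_false, ih]
    · simp only [List.map_cons, Bool.not_true, S_true, S_false, ih]

lemma S_rep_true (r s u v : ℝ) : ∀ (n : ℕ) (b c : ℝ),
    S r s u v b c (List.replicate n true) = b * r * E r n + c * u * E u n := by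
  intro n
  induction n with
  | zero => intro b c; simp [E]
  | succ n ih =>
    intro b c
    rw [List.replicate_succ, S_true, ih, E_succ, E_succ]; ring

lemma S_rep_false (r s u v : ℝ) : ∀ (n : ℕ) (b c : ℝ),
    S r s u v b c (List.replicate n false) = b * s * E s n + c * v * E v n := by
  intro n
  induction n with
  | zero => intro b c; simp [E]
  | succ n ih =>
    intro b c
    rw [List.replicate_succ, S_false, ih, E_succ, E_succ]; ring

lemma S_TF (r s u v : ℝ) (j : ℕ) (b c : ℝ) :
    S r s u v b c (true :: List.replicate j false)
      = b * r * E s (j + 1) + c * u * E v (j + 1) := by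
  rw [S_true, S_rep_false, E_succ, E_succ]; ring

lemma S_FT (r s u v : ℝ) (j : ℕ) (b c : ℝ) :
    S r s u v b c (false :: List.replicate j true)
      = b * s * E r (j + 1) + c * v * E u (j + 1) := by
  rw [S_false, S_rep_true, E_succ, E_succ]; ring

/-- c1 : in case (c), the word `TF^j` is dominated by a constant word. -/
lemma c1 {r s u v : ℝ} (h0s : 0 ≤ s) (h0u : 0 ≤ u) (hsr : s ≤ r) (huv : u ≤ v)
    (hur : u ≤ r) (hsv : s ≤ v) {b c : ℝ} (hb : 0 ≤ b) (hc : 0 ≤ c) (n : ℕ) :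
    b * r * E s n + c * u * E v n
      ≤ max (b * r * E r n + c * u * E u n) (b * s * E s n + c * v * E v n) := by
  rcases le_or_gt (b * r * E s n + c * u * E v n) (b * r * E r n + c * u * E u n) with hle | hgt
  · exact le_trans hle (le_max_left _ _)
  · refine le_trans ?_ (le_max_right _ _)
    -- enough : b*(r-s)*E s n ≤ c*(v-u)*E v n
    have h0r : 0 ≤ r := h0s.trans hsr
    have h0v : 0 ≤ v := h0u.trans huv
    have hEs := E_nonneg h0s n
    have hEv := E_nonneg h0v n
    have hEu := E_nonneg h0u n
    have hEr := E_nonneg h0r n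
    set X : ℝ := u * (E v n - E u n) with hX
    set Y : ℝ := r * (E r n - E s n) with hY
    have hX0 : 0 ≤ X := mul_nonneg h0u (by linarith [E_mono h0u huv n])
    have hY0 : 0 ≤ Y := mul_nonneg h0r (by linarith [E_mono h0s hsr n])
    have hbYcX : b * Y < c * X := by
      have : b * r * (E r n - E s n) < c * u * (E v n - E u n) := by nlinarith [hgt]
      rw [hX, hY]; nlinarith [this]
    -- dagger inequality in factored form
    have hdag := dagger h0u hur h0s hsv n
    have hWr := W_ident r s n
    have hWu : E v n - E u n = (v - u) * ∑ a ∈ Finset.range n, u ^ a * E v (n - 1 - a) := by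
      have := W_ident u v n
      have h2 : E v n - E u n = -(E u n - E v n) := by ring
      rw [h2, this]; ring
    have hstar : X * ((r - s) * E s n) ≤ Y * ((v - u) * E v n) := by
      rw [hX, hY, hWr, hWu]
      have hrs : (0:ℝ) ≤ r - s := by linarith
      have hvu : (0:ℝ) ≤ v - u := by linarith
      calc u * ((v - u) * ∑ a ∈ Finset.range n, u ^ a * E v (n - 1 - a)) * ((r - s) * E s n)
          = ((r - s) * (v - u)) * (u * (∑ a ∈ Finset.range n, u ^ a * E v (n - 1 - a)) * E s n) := by ring
        _ ≤ ((r - s) * (v - u)) * (r * (∑ a ∈ Finset.range n, r ^ a * E s (n - 1 - a)) * E v n) := by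
            exact mul_le_mul_of_nonneg_left hdag (mul_nonneg hrs hvu)
        _ = r * ((r - s) * ∑ a ∈ Finset.range n, r ^ a * E s (n - 1 - a)) * ((v - u) * E v n) := by ring
    have hkey : b * (r - s) * E s n ≤ c * (v - u) * E v n := by
      rcases eq_or_lt_of_le hX0 with hX0' | hXpos
      · exfalso
        have : c * X = 0 := by rw [← hX0']; ring
        nlinarith [mul_nonneg hb hY0]
      · have hchain : X * (b * ((r - s) * E s n)) ≤ X * (c * ((v - u) * E v n)) := by
          calc X * (b * ((r - s) * E s n)) = b * (X * ((r - s) * E s n)) := by ring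
            _ ≤ b * (Y * ((v - u) * E v n)) := mul_le_mul_of_nonneg_left hstar hb
            _ = (b * Y) * ((v - u) * E v n) := by ring
            _ ≤ (c * X) * ((v - u) * E v n) := by
                refine mul_le_mul_of_nonneg_right hbYcX.le ?_
                have hvu : (0:ℝ) ≤ v - u := by linarith
                exact mul_nonneg hvu hEv
            _ = X * (c * ((v - u) * E v n)) := by ring
        have := le_of_mul_le_mul_left hchain hXpos
        linarith [this]
    nlinarith [hkey]

/-- c2 : case (c), word `FT^j` dominated by constant. -/
lemma c2 {r s u v : ℝ} (h0s : 0 ≤ s) (h0u : 0 ≤ u) (hsr : s ≤ r) (huv : u ≤ v)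
    (hur : u ≤ r) (hsv : s ≤ v) {b c : ℝ} (hb : 0 ≤ b) (hc : 0 ≤ c) (n : ℕ) :
    b * s * E r n + c * v * E u n
      ≤ max (b * r * E r n + c * u * E u n) (b * s * E s n + c * v * E v n) := by
  have h := c1 (r := v) (s := u) (u := s) (v := r) h0u h0s huv hsr hsv hur hc hb n
  calc b * s * E r n + c * v * E u n = c * v * E u n + b * s * E r n := by ring
    _ ≤ max (c * v * E v n + b * s * E s n) (c * u * E u n + b * r * E r n) := h
    _ = max (b * r * E r n + c * u * E u n) (b * s * E s n + c * v * E v n) := by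
        rw [max_comm]; congr 1 <;> ring

/-- All-T dominates when both types prefer T coordinatewise. -/
lemma PT1 {r s u v : ℝ} (h0s : 0 ≤ s) (hsr : s ≤ r) (h0v : 0 ≤ v) (hvu : v ≤ u) :
    ∀ (w : List Bool) (b c : ℝ), 0 ≤ b → 0 ≤ c →
      S r s u v b c w ≤ S r s u v b c (List.replicate w.length true) := by
  intro w
  induction w with
  | nil => intro b c _ _; simp
  | cons x w ih =>
    intro b c hb hc
    have h0r : 0 ≤ r := h0s.trans hsr
    have h0u : 0 ≤ u := h0v.trans hvu
    cases x
    · rw [S_false, List.length_cons, List.replicate_succ, S_true]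
      have h1 : S r s u v (b * s) (c * v) w
          ≤ S r s u v (b * s) (c * v) (List.replicate w.length true) :=
        ih (b * s) (c * v) (mul_nonneg hb h0s) (mul_nonneg hc h0v)
      have h2 : b * s + c * v + S r s u v (b * s) (c * v) (List.replicate w.length true)
          = S r s u v b c (false :: List.replicate w.length true) := by rw [S_false]
      have h3 : S r s u v b c (false :: List.replicate w.length true)
          ≤ S r s u v b c (true :: List.replicate w.length true) := by
        rw [S_FT, S_true, S_rep_true, E_succ r, E_succ u]
        have hEr := E_nonneg h0r w.length
        have hEu := E_nonneg h0u w.length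
        have e1 : b * s * (1 + r * E r w.length) ≤ b * r * (1 + r * E r w.length) := by
          refine mul_le_mul_of_nonneg_right (mul_le_mul_of_nonneg_left hsr hb) ?_
          positivity
        have e2 : c * v * (1 + u * E u w.length) ≤ c * u * (1 + u * E u w.length) := by
          refine mul_le_mul_of_nonneg_right (mul_le_mul_of_nonneg_left hvu hc) ?_
          positivity
        nlinarith [e1, e2]
      have h4 : S r s u v b c (true :: List.replicate w.length true)
          = b * r + c * u + S r s u v (b * r) (c * u) (List.replicate w.length true) := S_true _ _ _ _ _ _ _
      linarith [h1, h3.trans_eq h4]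
    · rw [S_true, List.length_cons, List.replicate_succ, S_true]
      have h1 := ih (b * r) (c * u) (mul_nonneg hb h0r) (mul_nonneg hc h0u)
      linarith [h1]

/-- All-T dominates in case (a) when the myopic comparison favours T. -/
lemma PT2 {r s u v : ℝ} (h0u : 0 ≤ u) (huv : u ≤ v) (hvs : v ≤ s) (hsr : s ≤ r) :
    ∀ (w : List Bool) (b c : ℝ), 0 ≤ b → 0 ≤ c → c * (v - u) ≤ b * (r - s) →
      S r s u v b c w ≤ S r s u v b c (List.replicate w.length true) := by
  have h0v : 0 ≤ v := h0u.trans huv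
  have h0s : 0 ≤ s := h0v.trans hvs
  have h0r : 0 ≤ r := h0s.trans hsr
  have hur : u ≤ r := huv.trans (hvs.trans hsr)
  intro w
  induction w with
  | nil => intro b c _ _ _; simp
  | cons x w ih =>
    intro b c hb hc hAB
    have hB0 : 0 ≤ c * (v - u) := mul_nonneg hc (by linarith)
    cases x
    · -- false head
      rw [S_false, List.length_cons, List.replicate_succ, S_true]
      have hAB' : (c * v) * (v - u) ≤ (b * s) * (r - s) := by
        nlinarith [mul_le_mul_of_nonneg_left hAB h0v, mul_le_mul_of_nonneg_right hvs (hB0.trans hAB)]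
      have h1 : S r s u v (b * s) (c * v) w
          ≤ S r s u v (b * s) (c * v) (List.replicate w.length true) :=
        ih (b * s) (c * v) (mul_nonneg hb h0s) (mul_nonneg hc h0v) hAB'
      have h3 : S r s u v b c (false :: List.replicate w.length true)
          ≤ S r s u v b c (true :: List.replicate w.length true) := by
        rw [S_FT, S_true, S_rep_true, E_succ r, E_succ u]
        have hErEu : E u (w.length + 1) ≤ E r (w.length + 1) := E_mono h0u hur _
        have hEu : 0 ≤ E u (w.length + 1) := E_nonneg h0u _
        have key : c * (v - u) * E u (w.length + 1) ≤ b * (r - s) * E r (w.length + 1) := by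
          calc c * (v - u) * E u (w.length + 1) ≤ c * (v - u) * E r (w.length + 1) := by
                refine mul_le_mul_of_nonneg_left ?_ hB0
                exact E_mono h0u hur _
            _ ≤ b * (r - s) * E r (w.length + 1) := by
                refine mul_le_mul_of_nonneg_right hAB ?_
                exact E_nonneg h0r _
        rw [E_succ r, E_succ u] at key
        nlinarith [key]
      rw [S_false, S_true] at h3
      linarith [h1, h3]
    · rw [S_true, List.length_cons, List.replicate_succ, S_true]
      have hAB' : (c * u) * (v - u) ≤ (b * r) * (r - s) := by
        nlinarith [mul_le_mul_of_nonneg_left hAB h0u, mul_le_mul_of_nonneg_right hur (hB0.trans hAB)]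
      have h1 := ih (b * r) (c * u) (mul_nonneg hb h0r) (mul_nonneg hc h0u) hAB'
      linarith [h1]

/-- Exchange lemma: in case (a), a word `T F^a T^k` is dominated by some
`F^h T^…` threshold. -/
lemma a1 {r s u v : ℝ} (h0u : 0 ≤ u) (huv : u ≤ v) (hvs : v ≤ s) (hsr : s ≤ r) :
    ∀ (a : ℕ) (k : ℕ) (b c : ℝ), 0 ≤ b → 0 ≤ c →
      ∃ h ≤ a + k + 1,
        S r s u v b c (true :: (List.replicate a false ++ List.replicate k true))
          ≤ S r s u v b c
              (List.replicate h false ++ List.replicate (a + k + 1 - h) true) := by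
  have h0v : 0 ≤ v := h0u.trans huv
  have h0s : 0 ≤ s := h0v.trans hvs
  have h0r : 0 ≤ r := h0s.trans hsr
  intro a
  induction a with
  | zero =>
    intro k b c hb hc
    refine ⟨0, Nat.zero_le _, ?_⟩
    simp [List.replicate_succ]
  | succ a ih =>
    intro k b c hb hc
    rcases le_or_gt (c * (v - u)) (b * (r - s)) with hAB | hAB
    · refine ⟨0, Nat.zero_le _, ?_⟩
      have := PT2 h0u huv hvs hsr
        (true :: (List.replicate (a+1) false ++ List.replicate k true)) b c hb hc hAB
      simpa using this
    · -- swap the leading TF to FT, then use the IH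
      have hswap :
          S r s u v b c (true :: (List.replicate (a+1) false ++ List.replicate k true))
            ≤ S r s u v b c (false :: (true :: (List.replicate a false ++ List.replicate k true))) := by
        rw [List.replicate_succ, List.cons_append, S_true, S_false, S_false, S_true]
        have hcoef1 : b * r * s = b * s * r := by ring
        have hcoef2 : c * u * v = c * v * u := by ring
        rw [hcoef1, hcoef2]
        linarith [hAB]
      obtain ⟨h', hh', hle⟩ := ih k (b * s) (c * v) (mul_nonneg hb h0s) (mul_nonneg hc h0v)
      refine ⟨h' + 1, by omega, ?_⟩
      have harith : a + k + 1 - h' = a + 1 + k + 1 - (h' + 1) := by omega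
      calc S r s u v b c (true :: (List.replicate (a+1) false ++ List.replicate k true))
          ≤ S r s u v b c (false :: (true :: (List.replicate a false ++ List.replicate k true))) := hswap
        _ = b * s + c * v + S r s u v (b * s) (c * v)
              (true :: (List.replicate a false ++ List.replicate k true)) := S_false _ _ _ _ _ _ _
        _ ≤ b * s + c * v + S r s u v (b * s) (c * v)
              (List.replicate h' false ++ List.replicate (a + k + 1 - h') true) := by linarith [hle]
        _ = S r s u v b c (false :: (List.replicate h' false
              ++ List.replicate (a + k + 1 - h') true)) := (S_false _ _ _ _ _ _ _).symm
        _ = S r s u v b c (List.replicate (h' + 1) false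
              ++ List.replicate (a + 1 + k + 1 - (h' + 1)) true) := by
            rw [List.replicate_succ, List.cons_append, harith]

/-- Case (a): some `F^h T^…` threshold dominates any word. -/
lemma caseA {r s u v : ℝ} (h0u : 0 ≤ u) (huv : u ≤ v) (hvs : v ≤ s) (hsr : s ≤ r) :
    ∀ (w : List Bool) (b c : ℝ), 0 ≤ b → 0 ≤ c →
      ∃ h ≤ w.length,
        S r s u v b c w
          ≤ S r s u v b c (List.replicate h false ++ List.replicate (w.length - h) true) := by
  have h0v : 0 ≤ v := h0u.trans huv
  have h0s : 0 ≤ s := h0v.trans hvs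
  have h0r : 0 ≤ r := h0s.trans hsr
  intro w
  induction w with
  | nil => intro b c _ _; exact ⟨0, le_refl _, by simp⟩
  | cons x w ih =>
    intro b c hb hc
    cases x
    · obtain ⟨h', hh', hle⟩ := ih (b * s) (c * v) (mul_nonneg hb h0s) (mul_nonneg hc h0v)
      refine ⟨h' + 1, by simpa using Nat.succ_le_succ hh', ?_⟩
      rw [List.replicate_succ, List.cons_append, S_false, S_false, List.length_cons]
      have : w.length + 1 - (h' + 1) = w.length - h' := by omega
      rw [this]
      linarith [hle]
    · obtain ⟨h', hh', hle⟩ := ih (b * r) (c * u) (mul_nonneg hb h0r) (mul_nonneg hc h0u)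
      obtain ⟨h'', hh'', hle2⟩ := a1 h0u huv hvs hsr h' (w.length - h') b c hb hc
      refine ⟨h'', by simp only [List.length_cons]; omega, ?_⟩
      have harith : h' + (w.length - h') + 1 = (true :: w).length := by
        rw [List.length_cons]; omega
      calc S r s u v b c (true :: w)
          = b * r + c * u + S r s u v (b * r) (c * u) w := S_true _ _ _ _ _ _ _
        _ ≤ b * r + c * u + S r s u v (b * r) (c * u)
              (List.replicate h' false ++ List.replicate (w.length - h') true) := by linarith [hle]
        _ = S r s u v b c (true :: (List.replicate h' false
              ++ List.replicate (w.length - h') true)) := (S_true _ _ _ _ _ _ _).symm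
        _ ≤ S r s u v b c (List.replicate h'' false
              ++ List.replicate (h' + (w.length - h') + 1 - h'') true) := hle2
        _ = S r s u v b c (List.replicate h'' false
              ++ List.replicate ((true :: w).length - h'') true) := by rw [harith]

/-- Case (c): a constant word dominates any word. -/
lemma caseC {r s u v : ℝ} (h0s : 0 ≤ s) (h0u : 0 ≤ u) (hsr : s ≤ r) (huv : u ≤ v)
    (hur : u ≤ r) (hsv : s ≤ v) :
    ∀ (w : List Bool) (b c : ℝ), 0 ≤ b → 0 ≤ c →
      S r s u v b c w ≤ max (S r s u v b c (List.replicate w.length true))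
        (S r s u v b c (List.replicate w.length false)) := by
  have h0v : 0 ≤ v := h0u.trans huv
  have h0r : 0 ≤ r := h0s.trans hsr
  intro w
  induction w with
  | nil => intro b c _ _; simp
  | cons x w ih =>
    intro b c hb hc
    rw [List.length_cons]
    cases x
    · have h1 := ih (b * s) (c * v) (mul_nonneg hb h0s) (mul_nonneg hc h0v)
      rw [S_false]
      rcases max_cases (S r s u v (b * s) (c * v) (List.replicate w.length true))
        (S r s u v (b * s) (c * v) (List.replicate w.length false)) with ⟨heq, _⟩ | ⟨heq, _⟩
      · rw [heq] at h1
        have h2 : b * s + c * v + S r s u v (b * s) (c * v) (List.replicate w.length true)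
            = b * s * E r (w.length + 1) + c * v * E u (w.length + 1) := by
          rw [← S_FT, S_false]
        have h3 := c2 h0s h0u hsr huv hur hsv hb hc (w.length + 1)
        rw [← S_rep_true (r := r) (s := s) (u := u) (v := v) (w.length + 1) b c,
          ← S_rep_false (r := r) (s := s) (u := u) (v := v) (w.length + 1) b c] at h3
        calc b * s + c * v + S r s u v (b * s) (c * v) w
            ≤ b * s + c * v + S r s u v (b * s) (c * v) (List.replicate w.length true) := by
              linarith [h1]
          _ = b * s * E r (w.length + 1) + c * v * E u (w.length + 1) := h2
          _ ≤ _ := h3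
      · rw [heq] at h1
        refine le_trans ?_ (le_max_right _ _)
        rw [List.replicate_succ, S_false]
        linarith [h1]
    · have h1 := ih (b * r) (c * u) (mul_nonneg hb h0r) (mul_nonneg hc h0u)
      rw [S_true]
      rcases max_cases (S r s u v (b * r) (c * u) (List.replicate w.length true))
        (S r s u v (b * r) (c * u) (List.replicate w.length false)) with ⟨heq, _⟩ | ⟨heq, _⟩
      · rw [heq] at h1
        refine le_trans ?_ (le_max_left _ _)
        rw [List.replicate_succ, S_true]
        linarith [h1]
      · rw [heq] at h1
        have h2 : b * r + c * u + S r s u v (b * r) (c * u) (List.replicate w.length false)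
            = b * r * E s (w.length + 1) + c * u * E v (w.length + 1) := by
          rw [← S_TF, S_true]
        have h3 := c1 h0s h0u hsr huv hur hsv hb hc (w.length + 1)
        rw [← S_rep_true (r := r) (s := s) (u := u) (v := v) (w.length + 1) b c,
          ← S_rep_false (r := r) (s := s) (u := u) (v := v) (w.length + 1) b c] at h3
        calc b * r + c * u + S r s u v (b * r) (c * u) w
            ≤ b * r + c * u + S r s u v (b * r) (c * u) (List.replicate w.length false) := by
              linarith [h1]
          _ = b * r * E s (w.length + 1) + c * u * E v (w.length + 1) := h2
          _ ≤ _ := h3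

/-- helper: a constant word `true` as a threshold. -/
lemma rep_true_thresh (n : ℕ) : List.replicate n true
    = List.replicate n true ++ List.replicate (n - n) (!true) := by
  simp

lemma rep_false_thresh (n : ℕ) : List.replicate n false
    = List.replicate n false ++ List.replicate (n - n) (!false) := by
  simp

/-- Case `s ≤ r`, `u ≤ v` : the mixed case. -/
lemma caseIII {r s u v : ℝ} (h0s : 0 ≤ s) (h0u : 0 ≤ u) (hsr : s ≤ r) (huv : u ≤ v)
    (w : List Bool) (b c : ℝ) (hb : 0 ≤ b) (hc : 0 ≤ c) :
    ∃ (cc : Bool) (h : ℕ), h ≤ w.length ∧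
      S r s u v b c w
        ≤ S r s u v b c (List.replicate h cc ++ List.replicate (w.length - h) (!cc)) := by
  have h0v : 0 ≤ v := h0u.trans huv
  have h0r : 0 ≤ r := h0s.trans hsr
  rcases le_total u r with hur | hru
  · rcases le_total v s with hvs | hsv
    · -- case (a)
      obtain ⟨h, hh, hle⟩ := caseA h0u huv hvs hsr w b c hb hc
      exact ⟨false, h, hh, by simpa using hle⟩
    · -- case (c) : constants
      have := caseC h0s h0u hsr huv hur hsv w b c hb hc
      rcases max_cases (S r s u v b c (List.replicate w.length true))
        (S r s u v b c (List.replicate w.length false)) with ⟨heq, _⟩ | ⟨heq, _⟩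
      · rw [heq] at this
        exact ⟨true, w.length, le_refl _, by rw [← rep_true_thresh]; exact this⟩
      · rw [heq] at this
        exact ⟨false, w.length, le_refl _, by rw [← rep_false_thresh]; exact this⟩
  · rcases le_total v s with hvs | hsv
    · -- degenerate: r ≤ u, v ≤ s together with s ≤ r, u ≤ v forces r = s = u = v
      have hvu : v ≤ u := hvs.trans (hsr.trans hru)
      have := PT1 h0s hsr h0v hvu w b c hb hc
      exact ⟨true, w.length, le_refl _, by rw [← rep_true_thresh]; exact this⟩
    · -- case (b) : double swap, reduce to case (a)
      obtain ⟨h, hh, hle⟩ := caseA (r := v) (s := u) (u := s) (v := r)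
        h0s hsr hru huv (w.map not) c b hc hb
      rw [List.length_map] at hh hle
      have e1 : S r s u v b c w = S v u s r c b (w.map not) := by
        rw [S_typeswap, ← S_flip (v) (u) (s) (r) w]
      have e2 : S v u s r c b
            (List.replicate h false ++ List.replicate (w.length - h) true)
          = S r s u v b c (List.replicate h true ++ List.replicate (w.length - h) false) := by
        have : (List.replicate h true ++ List.replicate (w.length - h) false).map not
            = List.replicate h false ++ List.replicate (w.length - h) true := by
          simp [List.map_replicate]
        rw [← this, S_flip, S_typeswap]
      refine ⟨true, h, hh, ?_⟩
      rw [e1]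
      simpa [e2] using hle

/-- Master structure lemma: some threshold word dominates any word. -/
lemma master {r s u v : ℝ} (h0r : 0 ≤ r) (h0s : 0 ≤ s) (h0u : 0 ≤ u) (h0v : 0 ≤ v)
    (w : List Bool) (b c : ℝ) (hb : 0 ≤ b) (hc : 0 ≤ c) :
    ∃ (cc : Bool) (h : ℕ), h ≤ w.length ∧
      S r s u v b c w
        ≤ S r s u v b c (List.replicate h cc ++ List.replicate (w.length - h) (!cc)) := by
  rcases le_total s r with hsr | hrs
  · rcases le_total u v with huv | hvu
    · exact caseIII h0s h0u hsr huv w b c hb hc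
    · have := PT1 h0s hsr h0v hvu w b c hb hc
      exact ⟨true, w.length, le_refl _, by rw [← rep_true_thresh]; exact this⟩
  · rcases le_total u v with huv | hvu
    · -- all-F case via flip of PT1
      have := PT1 (r := s) (s := r) (u := v) (v := u) h0r hrs h0u huv (w.map not) b c hb hc
      rw [List.length_map] at this
      have e1 : S s r v u b c (w.map not) = S r s u v b c w := S_flip s r v u w b c
      have e2 : S s r v u b c (List.replicate w.length true)
          = S r s u v b c (List.replicate w.length false) := by
        have h3 : (List.replicate w.length false).map not = List.replicate w.length true := by
          simp [List.map_replicate]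
        rw [← h3, S_flip s r v u]
      rw [e1, e2] at this
      exact ⟨false, w.length, le_refl _, by rw [← rep_false_thresh]; exact this⟩
    · -- flip of caseIII
      obtain ⟨cc, h, hh, hle⟩ := caseIII (r := s) (s := r) (u := v) (v := u)
        h0r h0v hrs hvu (w.map not) b c hb hc
      rw [List.length_map] at hh hle
      have e1 : S s r v u b c (w.map not) = S r s u v b c w := S_flip s r v u w b c
      have e2 : S s r v u b c (List.replicate h cc ++ List.replicate (w.length - h) (!cc))
          = S r s u v b c (List.replicate h (!cc) ++ List.replicate (w.length - h) (!(!cc))) := by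
        have h3 : (List.replicate h (!cc) ++ List.replicate (w.length - h) (!(!cc))).map not
            = List.replicate h cc ++ List.replicate (w.length - h) (!cc) := by
          simp [List.map_replicate]
        rw [← h3, S_flip s r v u]
      rw [e1, e2] at hle
      exact ⟨!cc, h, hh, hle⟩

def cT : List Bool → ℕ
  | [] => 0
  | x :: w => (if x then 1 else 0) + cT w

def cF : List Bool → ℕ
  | [] => 0
  | x :: w => (if x then 0 else 1) + cF w

lemma cT_append_single (x : Bool) : ∀ w : List Bool, cT (w ++ [x]) = cT w + (if x then 1 else 0) := by
  intro w
  induction w with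
  | nil => cases x <;> simp [cT]
  | cons y w ih =>
    rw [List.cons_append]
    simp only [cT]
    rw [ih]
    omega

lemma cF_append_single (x : Bool) : ∀ w : List Bool, cF (w ++ [x]) = cF w + (if x then 0 else 1) := by
  intro w
  induction w with
  | nil => cases x <;> simp [cF]
  | cons y w ih =>
    rw [List.cons_append]
    simp only [cF]
    rw [ih]
    omega

def Lst (a : ℕ → Bool) (N : ℕ) : List Bool := (List.range N).map a

lemma Lst_zero (a : ℕ → Bool) : Lst a 0 = [] := rfl

lemma Lst_succ (a : ℕ → Bool) (N : ℕ) : Lst a (N + 1) = Lst a N ++ [a N] := by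
  rw [Lst, List.range_succ, List.map_append, Lst]; rfl

lemma Lst_length (a : ℕ → Bool) (N : ℕ) : (Lst a N).length = N := by
  rw [Lst, List.length_map, List.length_range]

lemma cnt1_succ (a : ℕ → Bool) (N : ℕ) :
    cnt1 a (N + 1) = cnt1 a N + (if a N = true then 1 else 0) := by
  unfold cnt1
  rw [Finset.range_add_one, Finset.filter_insert]
  by_cases h : a N = true
  · rw [if_pos h, if_pos h,
      Finset.card_insert_of_notMem
        (fun hm => Finset.notMem_range_self (Finset.mem_filter.mp hm).1)]
  · rw [if_neg h, if_neg h, add_zero]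

lemma cnt2_succ (a : ℕ → Bool) (N : ℕ) :
    cnt2 a (N + 1) = cnt2 a N + (if a N = false then 1 else 0) := by
  unfold cnt2
  rw [Finset.range_add_one, Finset.filter_insert]
  by_cases h : a N = false
  · rw [if_pos h, if_pos h,
      Finset.card_insert_of_notMem
        (fun hm => Finset.notMem_range_self (Finset.mem_filter.mp hm).1)]
  · rw [if_neg h, if_neg h, add_zero]

lemma cnt1_zero (a : ℕ → Bool) : cnt1 a 0 = 0 := by simp [cnt1]
lemma cnt2_zero (a : ℕ → Bool) : cnt2 a 0 = 0 := by simp [cnt2]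

lemma cT_Lst (a : ℕ → Bool) : ∀ N, cT (Lst a N) = cnt1 a N
  | 0 => by simp [Lst_zero, cT, cnt1_zero]
  | N + 1 => by
    rw [Lst_succ, cT_append_single, cT_Lst a N, cnt1_succ]
    try (cases h : a N <;> simp [h])

lemma cF_Lst (a : ℕ → Bool) : ∀ N, cF (Lst a N) = cnt2 a N
  | 0 => by simp [Lst_zero, cF, cnt2_zero]
  | N + 1 => by
    rw [Lst_succ, cF_append_single, cF_Lst a N, cnt2_succ]
    try (cases h : a N <;> simp [h])

lemma cnt_total (a : ℕ → Bool) (N : ℕ) : cnt1 a N + cnt2 a N = N := by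
  induction N with
  | zero => simp [cnt1_zero, cnt2_zero]
  | succ N ih => rw [cnt1_succ, cnt2_succ]; cases h : a N <;> simp [h] <;> omega

lemma S_append_single (r s u v : ℝ) (x : Bool) : ∀ (w : List Bool) (b c : ℝ),
    S r s u v b c (w ++ [x]) = S r s u v b c w +
      (if x then b * r ^ cT w * s ^ cF w * r + c * u ^ cT w * v ^ cF w * u
       else b * r ^ cT w * s ^ cF w * s + c * u ^ cT w * v ^ cF w * v) := by
  intro w
  induction w with
  | nil =>
    intro b c
    cases x
    · simp only [List.nil_append, S_false, S_nil, cT, cF, if_false, Bool.false_eq_true, pow_zero]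
      try ring
    · simp only [List.nil_append, S_true, S_nil, cT, cF, if_true, pow_zero]
      try ring
  | cons y w ih =>
    intro b c
    cases y
    · rw [List.cons_append, S_false, S_false, ih (b * s) (c * v)]
      have e : cT (false :: w) = cT w ∧ cF (false :: w) = cF w + 1 := by
        constructor <;> (simp [cT, cF]; try omega)
      rw [e.1, e.2]
      cases x <;> simp only [if_true, if_false, Bool.false_eq_true, pow_succ] <;> (try simp) <;> ring
    · rw [List.cons_append, S_true, S_true, ih (b * r) (c * u)]
      have e : cT (true :: w) = cT w + 1 ∧ cF (true :: w) = cF w := by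
        constructor <;> (simp [cT, cF]; try omega)
      rw [e.1, e.2]
      cases x <;> simp only [if_true, if_false, Bool.false_eq_true, pow_succ] <;> (try simp) <;> ring

lemma prefixEq (r s u v b c : ℝ) (a : ℕ → Bool) : ∀ N : ℕ,
    ∑ i ∈ Finset.range N,
        (b * r ^ cnt1 a (i + 1) * s ^ cnt2 a (i + 1)
          + c * u ^ cnt1 a (i + 1) * v ^ cnt2 a (i + 1))
      = S r s u v b c (Lst a N) := by
  intro N
  induction N with
  | zero => simp [Lst_zero]
  | succ N ih =>
    rw [Finset.sum_range_succ, ih, Lst_succ, S_append_single, cT_Lst, cF_Lst]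
    congr 1
    rw [cnt1_succ, cnt2_succ]
    cases h : a N <;> (simp [h, pow_succ]; try ring)

lemma Lst_threshold (c : Bool) (h : ℕ) : ∀ N : ℕ,
    Lst (thresholdSeq c h) N
      = List.replicate (min h N) c ++ List.replicate (N - min h N) (!c) := by
  intro N
  induction N with
  | zero => simp [Lst_zero]
  | succ N ih =>
    rw [Lst_succ, ih]
    by_cases hN : N < h
    · have h1 : min h N = N := by omega
      have h2 : min h (N + 1) = N + 1 := by omega
      have hx : thresholdSeq c h N = c := by simp [thresholdSeq, hN]
      rw [h1, h2, hx, Nat.sub_self, Nat.sub_self, List.replicate_zero,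
        List.append_nil, List.append_nil, ← List.replicate_succ']
    · have h1 : min h N = h := by omega
      have h2 : min h (N + 1) = h := by omega
      have hx : thresholdSeq c h N = !c := by simp [thresholdSeq, hN]
      rw [h1, h2, hx, List.append_assoc]
      have h3 : N + 1 - h = (N - h) + 1 := by omega
      rw [h3, List.replicate_succ' (n := N - h) (a := !c)]
      try rfl

end ThreshAux

/-- In the two-type two-category departing bandit with all
click probabilities at most `1 - ε`, if `astar` is an optimal deterministic
policy, then its expected return exceeds that of the best `(c,h)`-threshold
policy with `h ≤ H` by at most `(1-ε)^H / ε`. -/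
theorem threshold_approximation
    (p1x p2x p1y p2y b ε : ℝ) (H : ℕ)
    (hε : ε ∈ Set.Ioo (0 : ℝ) 1)
    (h1x : p1x ∈ Set.Ioo (0 : ℝ) 1) (h2x : p2x ∈ Set.Ioo (0 : ℝ) 1)
    (h1y : p1y ∈ Set.Ioo (0 : ℝ) 1) (h2y : p2y ∈ Set.Ioo (0 : ℝ) 1)
    (hbound : p1x ≤ 1 - ε ∧ p2x ≤ 1 - ε ∧ p1y ≤ 1 - ε ∧ p2y ≤ 1 - ε)
    (hb : b ∈ Set.Icc (0 : ℝ) 1)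
    (astar : ℕ → Bool)
    (hopt : ∀ a : ℕ → Bool,
      twoTypeReturn p1x p2x p1y p2y b a ≤ twoTypeReturn p1x p2x p1y p2y b astar) :
    ∃ c : Bool, ∃ h : ℕ, h ≤ H ∧
      twoTypeReturn p1x p2x p1y p2y b astar
          - twoTypeReturn p1x p2x p1y p2y b (thresholdSeq c h)
        ≤ (1 - ε) ^ H / ε := by
  obtain ⟨hε0, hε1⟩ := hε
  obtain ⟨hb0, hb1⟩ := hb
  obtain ⟨hbx1, hbx2, hby1, hby2⟩ := hbound
  have h0r : 0 ≤ p1x := h1x.1.le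
  have h0s : 0 ≤ p2x := h2x.1.le
  have h0u : 0 ≤ p1y := h1y.1.le
  have h0v : 0 ≤ p2y := h2y.1.le
  have hle1 : 0 ≤ 1 - ε := by linarith
  have hlt1 : 1 - ε < 1 := by linarith
  set term : (ℕ → Bool) → ℕ → ℝ := fun a i =>
    b * p1x ^ cnt1 a (i + 1) * p2x ^ cnt2 a (i + 1)
      + (1 - b) * p1y ^ cnt1 a (i + 1) * p2y ^ cnt2 a (i + 1) with hterm_def
  have hreturn : ∀ a, twoTypeReturn p1x p2x p1y p2y b a = ∑' i, term a i := fun a => rfl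
  have hterm_nonneg : ∀ a i, 0 ≤ term a i := by
    intro a i
    have : 0 ≤ 1 - b := by linarith
    simp only [hterm_def]
    positivity
  have hterm_le : ∀ a i, term a i ≤ (1 - ε) ^ (i + 1) := by
    intro a i
    have hx : p1x ^ cnt1 a (i + 1) * p2x ^ cnt2 a (i + 1) ≤ (1 - ε) ^ (i + 1) := by
      calc p1x ^ cnt1 a (i + 1) * p2x ^ cnt2 a (i + 1)
          ≤ (1 - ε) ^ cnt1 a (i + 1) * (1 - ε) ^ cnt2 a (i + 1) :=
            mul_le_mul (pow_le_pow_left₀ h0r hbx1 _) (pow_le_pow_left₀ h0s hbx2 _)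
              (by positivity) (by positivity)
        _ = (1 - ε) ^ (i + 1) := by rw [← pow_add, ThreshAux.cnt_total a (i + 1)]
    have hy : p1y ^ cnt1 a (i + 1) * p2y ^ cnt2 a (i + 1) ≤ (1 - ε) ^ (i + 1) := by
      calc p1y ^ cnt1 a (i + 1) * p2y ^ cnt2 a (i + 1)
          ≤ (1 - ε) ^ cnt1 a (i + 1) * (1 - ε) ^ cnt2 a (i + 1) :=
            mul_le_mul (pow_le_pow_left₀ h0u hby1 _) (pow_le_pow_left₀ h0v hby2 _)
              (by positivity) (by positivity)
        _ = (1 - ε) ^ (i + 1) := by rw [← pow_add, ThreshAux.cnt_total a (i + 1)]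
    have h1b : 0 ≤ 1 - b := by linarith
    simp only [hterm_def]
    calc b * p1x ^ cnt1 a (i + 1) * p2x ^ cnt2 a (i + 1)
          + (1 - b) * p1y ^ cnt1 a (i + 1) * p2y ^ cnt2 a (i + 1)
        = b * (p1x ^ cnt1 a (i + 1) * p2x ^ cnt2 a (i + 1))
          + (1 - b) * (p1y ^ cnt1 a (i + 1) * p2y ^ cnt2 a (i + 1)) := by ring
      _ ≤ b * (1 - ε) ^ (i + 1) + (1 - b) * (1 - ε) ^ (i + 1) := by
          refine add_le_add (mul_le_mul_of_nonneg_left hx hb0)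
            (mul_le_mul_of_nonneg_left hy h1b)
      _ = (1 - ε) ^ (i + 1) := by ring
  have hgeom : Summable (fun i : ℕ => (1 - ε) ^ (i + 1)) := by
    have := (summable_geometric_of_lt_one hle1 hlt1).mul_right (1 - ε)
    refine this.congr fun i => ?_
    rw [← pow_succ]
  have hsummable : ∀ a, Summable (term a) := fun a =>
    Summable.of_nonneg_of_le (hterm_nonneg a) (hterm_le a) hgeom
  have hgeom_shift : Summable (fun i : ℕ => (1 - ε) ^ (i + H + 1)) := by
    have := (summable_nat_add_iff H).mpr hgeom
    exact this.congr fun i => by ring_nf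
  have htail : ∀ a, ∑' i, term a (i + H) ≤ (1 - ε) ^ (H + 1) / ε := by
    intro a
    have h1 : ∑' i, term a (i + H) ≤ ∑' i : ℕ, (1 - ε) ^ (i + H + 1) := by
      refine Summable.tsum_le_tsum (fun i => ?_) ((summable_nat_add_iff H).mpr (hsummable a)) hgeom_shift
      exact hterm_le a (i + H)
    have h2 : ∑' i : ℕ, (1 - ε) ^ (i + H + 1) = (1 - ε) ^ (H + 1) / ε := by
      have e : ∀ i : ℕ, (1 - ε) ^ (i + H + 1) = (1 - ε) ^ i * (1 - ε) ^ (H + 1) := by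
        intro i
        have hiH : i + H + 1 = i + (H + 1) := by omega
        rw [hiH, pow_add]
      rw [tsum_congr e, tsum_mul_right, tsum_geometric_of_lt_one hle1 hlt1]
      have : 1 - (1 - ε) = ε := by ring
      rw [this]
      rw [div_eq_mul_inv, mul_comm]
    rw [← h2]; exact h1
  have hsplit : ∀ a, ∑' i, term a i
      = (∑ i ∈ Finset.range H, term a i) + ∑' i, term a (i + H) :=
    fun a => (Summable.sum_add_tsum_nat_add H (hsummable a)).symm
  have htail_nonneg : ∀ a, 0 ≤ ∑' i, term a (i + H) := fun a =>
    tsum_nonneg fun i => hterm_nonneg a (i + H)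
  have h1b : 0 ≤ 1 - b := by linarith
  obtain ⟨cc, h, hh, hle⟩ := ThreshAux.master h0r h0s h0u h0v
    (ThreshAux.Lst astar H) b (1 - b) hb0 h1b
  rw [ThreshAux.Lst_length] at hh hle
  have hthr : ThreshAux.Lst (thresholdSeq cc h) H
      = List.replicate h cc ++ List.replicate (H - h) (!cc) := by
    rw [ThreshAux.Lst_threshold, min_eq_left hh]
  have hprefix : (∑ i ∈ Finset.range H, term astar i)
      ≤ ∑ i ∈ Finset.range H, term (thresholdSeq cc h) i := by
    rw [ThreshAux.prefixEq p1x p2x p1y p2y b (1 - b) astar H,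
      ThreshAux.prefixEq p1x p2x p1y p2y b (1 - b) (thresholdSeq cc h) H, hthr]
    exact hle
  refine ⟨cc, h, hh, ?_⟩
  have hA : twoTypeReturn p1x p2x p1y p2y b astar
      ≤ (∑ i ∈ Finset.range H, term astar i) + (1 - ε) ^ (H + 1) / ε := by
    rw [hreturn, hsplit]
    linarith [htail astar]
  have hB : (∑ i ∈ Finset.range H, term (thresholdSeq cc h) i)
      ≤ twoTypeReturn p1x p2x p1y p2y b (thresholdSeq cc h) := by
    rw [hreturn, hsplit]
    linarith [htail_nonneg (thresholdSeq cc h)]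
  have hpow : (1 - ε) ^ (H + 1) / ε ≤ (1 - ε) ^ H / ε := by
    have hp : (1 - ε) ^ (H + 1) ≤ (1 - ε) ^ H := by
      rw [pow_succ]
      nlinarith [pow_nonneg hle1 H]
    exact (div_le_div_iff_of_pos_right hε0).mpr hp
  linarith [hA, hB, hprefix, hpow]
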